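/- Let x, y be vectors of positive reals with (1-ε)ⁿ ≤ x_i ≤ (1+ε)ⁿ for all i, for some 0 < ε < 1, and let c_i > s_i > 0 (indices mod n). Then Σ c_i(x_i² + x_{i+1}²) / [Σ c_i(x_i - x_{i+1})² + Σ 2x_i x_{i+1}(c_i - s_i)] ≤ ((1+ε)/(1-ε))^{2n} · Σ c_i / Σ (c_i - s_i). -/
import Mathlib


theorem stmt_18 (n : ℕ) [NeZero n] (hn : 3 ≤ n) (c s : Fin n → ℝ)
    (hs : ∀ i, 0 < s i) (hc : ∀ i, s i < c i)
    (x : Fin n → ℝ) (hx : ∀ i, 0 < x i)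
    (ε : ℝ) (hε0 : 0 < ε) (hε1 : ε < 1)
    (hxb : ∀ i, (1 - ε) ^ n ≤ x i ∧ x i ≤ (1 + ε) ^ n) :
    (∑ i : Fin n, c i * (x i ^ 2 + x (i + 1) ^ 2)) /
      ((∑ i : Fin n, c i * (x i - x (i + 1)) ^ 2) +
       (∑ i : Fin n, 2 * x i * x (i + 1) * (c i - s i))) ≤
    ((1 + ε) / (1 - ε)) ^ (2 * n) *
      ((∑ i : Fin n, c i) / (∑ i : Fin n, (c i - s i))) := by
  have hε' : (0:ℝ) < 1 - ε := by linarith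
  have hεp : (0:ℝ) < 1 + ε := by linarith
  have hpl : (0:ℝ) < (1 - ε) ^ n := pow_pos hε' n
  have hpu : (0:ℝ) < (1 + ε) ^ n := pow_pos hεp n
  have hcs : ∀ i, (0:ℝ) < c i - s i := fun i => sub_pos.2 (hc i)
  have hSumcs : 0 < ∑ i : Fin n, (c i - s i) :=
    Finset.sum_pos (fun i _ => hcs i) Finset.univ_nonempty
  have hSumc : 0 < ∑ i : Fin n, c i :=
    Finset.sum_pos (fun i _ => (hs i).trans (hc i)) Finset.univ_nonempty
  set P : ℝ := (1 + ε) ^ (2 * n) with hP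
  set Q : ℝ := (1 - ε) ^ (2 * n) with hQ
  have hPn : P = ((1 + ε) ^ n) ^ 2 := by rw [hP, two_mul, pow_add, sq]
  have hQn : Q = ((1 - ε) ^ n) ^ 2 := by rw [hQ, two_mul, pow_add, sq]
  have hQpos : 0 < Q := by rw [hQn]; positivity
  have hPpos : 0 < P := by rw [hPn]; positivity
  -- numerator bound
  have hA : (∑ i : Fin n, c i * (x i ^ 2 + x (i + 1) ^ 2)) ≤
      2 * P * ∑ i : Fin n, c i := by
    have : (∑ i : Fin n, c i * (x i ^ 2 + x (i + 1) ^ 2)) ≤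
        ∑ i : Fin n, c i * (2 * P) := by
      apply Finset.sum_le_sum
      intro i _
      have h1 : x i ^ 2 ≤ P := by
        rw [hPn]
        exact pow_le_pow_left₀ (hx i).le (hxb i).2 2
      have h2 : x (i + 1) ^ 2 ≤ P := by
        rw [hPn]
        exact pow_le_pow_left₀ (hx (i + 1)).le (hxb (i + 1)).2 2
      have hci : 0 < c i := (hs i).trans (hc i)
      nlinarith
    calc _ ≤ ∑ i : Fin n, c i * (2 * P) := this
      _ = 2 * P * ∑ i : Fin n, c i := by
          rw [← Finset.sum_mul]; ring
  -- denominator bound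
  have hB : 2 * Q * (∑ i : Fin n, (c i - s i)) ≤
      (∑ i : Fin n, c i * (x i - x (i + 1)) ^ 2) +
       (∑ i : Fin n, 2 * x i * x (i + 1) * (c i - s i)) := by
    have h1 : (0:ℝ) ≤ ∑ i : Fin n, c i * (x i - x (i + 1)) ^ 2 := by
      apply Finset.sum_nonneg
      intro i _
      have : 0 < c i := (hs i).trans (hc i)
      positivity
    have h2 : 2 * Q * (∑ i : Fin n, (c i - s i)) ≤
        ∑ i : Fin n, 2 * x i * x (i + 1) * (c i - s i) := by
      rw [Finset.mul_sum]
      apply Finset.sum_le_sum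
      intro i _
      have hm : (1 - ε) ^ n * (1 - ε) ^ n ≤ x i * x (i + 1) :=
        mul_le_mul (hxb i).1 (hxb (i + 1)).1 hpl.le (hx i).le
      have hq : Q = (1 - ε) ^ n * (1 - ε) ^ n := by rw [hQn]; ring
      nlinarith [hcs i]
    linarith
  have hBpos : 0 < (∑ i : Fin n, c i * (x i - x (i + 1)) ^ 2) +
       (∑ i : Fin n, 2 * x i * x (i + 1) * (c i - s i)) := by
    have : 0 < 2 * Q * (∑ i : Fin n, (c i - s i)) := by positivity
    linarith
  have hDpos : (0:ℝ) < 2 * Q * (∑ i : Fin n, (c i - s i)) := by positivity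
  have key : (∑ i : Fin n, c i * (x i ^ 2 + x (i + 1) ^ 2)) /
      ((∑ i : Fin n, c i * (x i - x (i + 1)) ^ 2) +
       (∑ i : Fin n, 2 * x i * x (i + 1) * (c i - s i))) ≤
      (2 * P * ∑ i : Fin n, c i) / (2 * Q * ∑ i : Fin n, (c i - s i)) := by
    apply div_le_div₀ (by positivity) hA hDpos hB
  have heq : (2 * P * ∑ i : Fin n, c i) / (2 * Q * ∑ i : Fin n, (c i - s i)) =
      ((1 + ε) / (1 - ε)) ^ (2 * n) *
      ((∑ i : Fin n, c i) / (∑ i : Fin n, (c i - s i))) := by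
    rw [div_pow, ← hP, ← hQ, ← div_mul_div_comm,
      mul_div_mul_left _ _ (two_ne_zero)]
  linarith [key, heq ▸ key]
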